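/- Let k : ℝ → ℝ be continuous with support in [0,1], and define φ₀(r) = -(1/r)∫₀^r s·e^{s²/2}(∫_s^∞ e^{-l²/2} k(l) dl) ds. Then there exists a constant C > 0 (depending only on k) such that |φ₀(r)| ≤ C·r/(r² + 1) for all r > 0. -/

import Mathlib

open MeasureTheory Real Set

theorem stmt2 (k : ℝ → ℝ) (hk : Continuous k)
    (hsupp : Function.support k ⊆ Set.Icc 0 1)
    (φ₀ : ℝ → ℝ)
    (hφ₀ : ∀ r > (0:ℝ), φ₀ r =
      -(1/r) * ∫ s in (0:ℝ)..r, s * Real.exp (s^2/2) *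
        (∫ l in Set.Ioi s, Real.exp (-l^2/2) * k l)) :
    ∃ C > (0:ℝ), ∀ r > (0:ℝ), |φ₀ r| ≤ C * r / (r^2 + 1) := by
  set f : ℝ → ℝ := fun l => Real.exp (-l^2/2) * k l with hf
  have hfc : Continuous f := (Real.continuous_exp.comp (by fun_prop)).mul hk
  have hfzero : ∀ l : ℝ, 1 < l → f l = 0 := by
    intro l hl
    have : k l = 0 := by
      by_contra h
      exact absurd ((hsupp h).2) (not_le.mpr hl)
    simp [hf, this]
  have hfzero' : ∀ l : ℝ, l ∉ Set.Icc (0:ℝ) 1 → f l = 0 := by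
    intro l hl
    have : k l = 0 := by
      by_contra h
      exact hl (hsupp h)
    simp [hf, this]
  have hfcs : HasCompactSupport f :=
    HasCompactSupport.intro isCompact_Icc hfzero'
  have hfint : Integrable f := hfc.integrable_of_hasCompactSupport hfcs
  set F : ℝ → ℝ := fun s => ∫ l in Set.Ioi s, f l with hF
  -- F as an interval integral
  have hF2 : ∀ s : ℝ, F s = ∫ l in s..2, f l := by
    intro s
    rcases le_or_gt s 2 with hs | hs
    · have hsplit : Set.Ioi s = Set.Ioc s 2 ∪ Set.Ioi 2 := (Set.Ioc_union_Ioi_eq_Ioi hs).symm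
      have hdisj : Disjoint (Set.Ioc s 2) (Set.Ioi 2) := by
        apply Set.disjoint_left.mpr
        intro x hx hx2
        exact absurd hx.2 (not_le.mpr hx2)
      have h2 : (∫ l in Set.Ioi (2:ℝ), f l) = 0 :=
        setIntegral_eq_zero_of_forall_eq_zero fun x hx => hfzero x (lt_trans one_lt_two hx)
      rw [hF]
      simp only
      rw [hsplit, setIntegral_union hdisj measurableSet_Ioi hfint.integrableOn
        hfint.integrableOn, h2, add_zero, intervalIntegral.integral_of_le hs]
    · have h1 : F s = 0 :=
        setIntegral_eq_zero_of_forall_eq_zero fun x hx =>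
          hfzero x (lt_trans (lt_trans one_lt_two hs) hx)
      have h2 : (∫ l in s..2, f l) = 0 := by
        rw [intervalIntegral.integral_symm, intervalIntegral.integral_of_le hs.le]
        rw [setIntegral_eq_zero_of_forall_eq_zero fun x hx =>
          hfzero x (lt_trans one_lt_two hx.1), neg_zero]
      rw [h1, h2]
  have hFcont : Continuous F := by
    have h := intervalIntegral.continuous_primitive
      (fun a b => hfint.intervalIntegrable) 2 (μ := volume)
    have : Continuous fun s => ∫ l in s..2, f l := by
      have := h.neg
      have := this.congr (fun s => (intervalIntegral.integral_symm 2 s).symm)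
      exact this
    exact (continuous_congr (fun s => (hF2 s).symm)).mp this
  have hFzero : ∀ s : ℝ, 1 ≤ s → F s = 0 := by
    intro s hs
    exact setIntegral_eq_zero_of_forall_eq_zero fun x hx => hfzero x (lt_of_le_of_lt hs hx)
  set M : ℝ := ∫ l, |f l| with hM
  have hM0 : 0 ≤ M := integral_nonneg fun x => abs_nonneg _
  have hFbound : ∀ s : ℝ, |F s| ≤ M := by
    intro s
    calc |F s| ≤ ∫ l in Set.Ioi s, |f l| := by
          simpa [Real.norm_eq_abs] using
            norm_integral_le_integral_norm (μ := volume.restrict (Set.Ioi s)) f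
      _ ≤ M := setIntegral_le_integral hfint.abs (Filter.Eventually.of_forall fun x => abs_nonneg _)
  set g : ℝ → ℝ := fun s => s * Real.exp (s^2/2) * F s with hg
  have hgcont : Continuous g := by
    apply Continuous.mul _ hFcont
    exact continuous_id.mul (Real.continuous_exp.comp (by fun_prop))
  have hgint : ∀ a b : ℝ, IntervalIntegrable g volume a b :=
    fun a b => hgcont.intervalIntegrable a b
  set B : ℝ := Real.exp (1/2) * M + 1 with hB
  have hB0 : 0 < B := by positivity
  have hgbound : ∀ s ∈ Set.Icc (0:ℝ) 1, |g s| ≤ B * s := by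
    intro s hs
    have h1 : |g s| = s * Real.exp (s^2/2) * |F s| := by
      rw [hg]; simp only
      rw [abs_mul, abs_mul, abs_of_nonneg hs.1, abs_of_nonneg (Real.exp_nonneg _)]
    rw [h1]
    have he : Real.exp (s^2/2) ≤ Real.exp (1/2) := by
      apply Real.exp_le_exp.mpr
      nlinarith [hs.1, hs.2]
    calc s * Real.exp (s^2/2) * |F s| ≤ s * Real.exp (1/2) * M := by
          apply mul_le_mul _ (hFbound s) (abs_nonneg _) (mul_nonneg hs.1 (Real.exp_nonneg _))
          exact mul_le_mul_of_nonneg_left he hs.1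
      _ ≤ B * s := by rw [hB]; nlinarith [Real.exp_nonneg (1/2:ℝ), hs.1]
  have hgzero : ∀ s : ℝ, 1 ≤ s → g s = 0 := by
    intro s hs
    rw [hg]; simp only
    rw [hFzero s hs, mul_zero]
  -- bound on the integral for r ∈ (0,1]
  have hIbound : ∀ r : ℝ, 0 < r → r ≤ 1 → |∫ s in (0:ℝ)..r, g s| ≤ B * r^2 / 2 := by
    intro r hr hr1
    calc |∫ s in (0:ℝ)..r, g s| ≤ ∫ s in (0:ℝ)..r, |g s| :=
          intervalIntegral.abs_integral_le_integral_abs hr.le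
      _ ≤ ∫ s in (0:ℝ)..r, B * s := by
          apply intervalIntegral.integral_mono_on hr.le ((hgint 0 r).abs)
          · exact (continuous_const.mul continuous_id).intervalIntegrable 0 r
          · intro x hx
            exact hgbound x ⟨hx.1, le_trans hx.2 hr1⟩
      _ = B * r^2 / 2 := by
          rw [intervalIntegral.integral_const_mul, integral_id]
          ring
  refine ⟨B, hB0, fun r hr => ?_⟩
  rw [hφ₀ r hr]
  have habs : |(-(1/r) * ∫ s in (0:ℝ)..r, g s)| = (1/r) * |∫ s in (0:ℝ)..r, g s| := by
    rw [abs_mul, abs_neg, abs_of_nonneg (by positivity : (0:ℝ) ≤ 1/r)]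
  have hgoal : |(-(1/r) * ∫ s in (0:ℝ)..r, g s)| ≤ B * r / (r^2 + 1) := by
    rw [habs]
    rcases le_or_gt r 1 with hr1 | hr1
    · have h1 := hIbound r hr hr1
      have h2 : (1/r) * |∫ s in (0:ℝ)..r, g s| ≤ (1/r) * (B * r^2 / 2) :=
        mul_le_mul_of_nonneg_left h1 (by positivity)
      have h3 : (1/r) * (B * r^2 / 2) = B * r / 2 := by field_simp
      rw [h3] at h2
      apply le_trans h2
      rw [div_le_div_iff₀ (by norm_num) (by positivity)]
      nlinarith [mul_nonneg (mul_nonneg hB0.le hr.le) (by nlinarith : (0:ℝ) ≤ 1 - r^2)]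
    · have hsplit : (∫ s in (0:ℝ)..r, g s) = (∫ s in (0:ℝ)..1, g s) + ∫ s in (1:ℝ)..r, g s :=
        (intervalIntegral.integral_add_adjacent_intervals (hgint 0 1) (hgint 1 r)).symm
      have hzero : (∫ s in (1:ℝ)..r, g s) = 0 := by
        have heq : Set.EqOn g 0 (Set.uIcc 1 r) := by
          intro x hx
          rw [Set.uIcc_of_le hr1.le] at hx
          exact hgzero x hx.1
        rw [intervalIntegral.integral_congr heq]
        simp
      have h1 := hIbound 1 one_pos le_rfl
      rw [one_pow, mul_one] at h1
      rw [hsplit, hzero, add_zero]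
      have h2 : (1/r) * |∫ s in (0:ℝ)..1, g s| ≤ (1/r) * (B / 2) :=
        mul_le_mul_of_nonneg_left h1 (by positivity)
      apply le_trans h2
      rw [show (1/r) * (B/2) = B / (2*r) by ring,
        div_le_div_iff₀ (by positivity) (by positivity)]
      nlinarith [mul_nonneg hB0.le (by nlinarith : (0:ℝ) ≤ r^2 - 1)]
  exact hgoal
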